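/- Let Λ > 0 satisfy 2Λ² > 1, and define g(β) = (β/2)·(1/2 + Λ²/(β e^{β})) = β/4 + Λ²/(2 e^{β}) for β > 0. Then g attains a strict global minimum on (0, ∞) at β_i = 2 ln Λ + ln 2: g is strictly decreasing on (0, β_i) and strictly increasing on (β_i, ∞). -/
import Mathlib


open Real Set

/-- For `Λ > 0` with `2Λ² > 1`, the leading-order cut-off mean duration
`g(β) = (β/2)(1/2 + Λ²/(β e^β)) = β/4 + Λ²/(2 e^β)` attains a strict global minimum
on `(0,∞)` at `β_i = 2 ln Λ + ln 2`: it is strictly decreasing on `(0, β_i)` and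
strictly increasing on `(β_i, ∞)`. -/
theorem three_level_cutoff_duration_minimum (Λ : ℝ) (hΛ : 0 < Λ)
    (hΛ2 : 1 < 2 * Λ ^ 2)
    (g : ℝ → ℝ) (hg : g = fun β => β / 4 + Λ ^ 2 / (2 * Real.exp β))
    (βi : ℝ) (hβi : βi = 2 * Real.log Λ + Real.log 2) :
    (∀ β : ℝ, 0 < β →
      β / 2 * (1 / 2 + Λ ^ 2 / (β * Real.exp β)) = g β) ∧
    StrictAntiOn g (Ioo 0 βi) ∧
    StrictMonoOn g (Ioi βi) ∧
    (∀ β : ℝ, 0 < β → β ≠ βi → g βi < g β) := by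
  have hexpβi : Real.exp βi = 2 * Λ ^ 2 := by
    have h2 : (2 : ℝ) * Real.log Λ = Real.log (Λ ^ 2) := by
      rw [Real.log_pow]; push_cast; ring
    rw [hβi, h2, Real.exp_add, Real.exp_log (by positivity), Real.exp_log two_pos]
    ring
  subst hg
  refine ⟨?_, ?_, ?_, ?_⟩
  · intro β hβ
    have hE := Real.exp_pos β
    field_simp
    ring
  · intro a ha b hb hab
    simp only
    have hea := Real.exp_pos a
    have heb := Real.exp_pos b
    have h1 : b - a + 1 < Real.exp b / Real.exp a := by
      rw [← Real.exp_sub]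
      have := Real.add_one_lt_exp (x := b - a) (by linarith)
      linarith
    have h1' : Real.exp a * (b - a + 1) < Real.exp b := by
      rw [lt_div_iff₀ hea] at h1; linarith
    have h2 : Real.exp b < 2 * Λ ^ 2 := by
      rw [← hexpβi]; exact Real.exp_lt_exp.2 hb.2
    rw [div_add_div _ _ (by positivity) (by positivity),
      div_add_div _ _ (by positivity) (by positivity), div_lt_div_iff₀ (by positivity) (by positivity)]
    have p1 : 2 * Λ ^ 2 * (Real.exp a * (b - a)) < 2 * Λ ^ 2 * (Real.exp b - Real.exp a) := by
      have := mul_lt_mul_of_pos_left (show Real.exp a * (b - a) < Real.exp b - Real.exp a by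
        nlinarith) (show (0:ℝ) < 2 * Λ ^ 2 by positivity)
      linarith
    have p2 : Real.exp b * (Real.exp a * (b - a)) < 2 * Λ ^ 2 * (Real.exp a * (b - a)) := by
      have hpos : 0 < Real.exp a * (b - a) := by nlinarith
      nlinarith
    nlinarith [p1, p2]
  · intro a ha b hb hab
    simp only
    have hea := Real.exp_pos a
    have heb := Real.exp_pos b
    have h1 : Real.exp b * (a - b + 1) < Real.exp a := by
      have h := Real.add_one_lt_exp (x := a - b) (by linarith)
      have : Real.exp (a - b) = Real.exp a / Real.exp b := Real.exp_sub a b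
      rw [this] at h
      rw [lt_div_iff₀ heb] at h
      nlinarith
    have h2 : 2 * Λ ^ 2 < Real.exp a := by
      rw [← hexpβi]; exact Real.exp_lt_exp.2 ha
    rw [div_add_div _ _ (by positivity) (by positivity),
      div_add_div _ _ (by positivity) (by positivity), div_lt_div_iff₀ (by positivity) (by positivity)]
    have q1 : 2 * Λ ^ 2 * (Real.exp b - Real.exp a) < 2 * Λ ^ 2 * (Real.exp b * (b - a)) := by
      have := mul_lt_mul_of_pos_left (show Real.exp b - Real.exp a < Real.exp b * (b - a) by
        nlinarith) (show (0:ℝ) < 2 * Λ ^ 2 by positivity)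
      linarith
    have q2 : 2 * Λ ^ 2 * (Real.exp b * (b - a)) < Real.exp a * (Real.exp b * (b - a)) := by
      have hpos : 0 < Real.exp b * (b - a) := by nlinarith
      nlinarith
    nlinarith [q1, q2]
  · intro β hβ hne
    simp only
    have heβ := Real.exp_pos β
    have heβi := Real.exp_pos βi
    have h1 : βi - β + 1 < Real.exp βi / Real.exp β := by
      rw [← Real.exp_sub]
      have := Real.add_one_lt_exp (x := βi - β) (by intro h; apply hne; linarith)
      linarith
    have h1' : Real.exp β * (βi - β + 1) < Real.exp βi := by
      rw [lt_div_iff₀ heβ] at h1; nlinarith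
    rw [hexpβi] at h1'
    rw [div_add_div _ _ (by positivity) (by positivity),
      div_add_div _ _ (by positivity) (by positivity), div_lt_div_iff₀ (by positivity) (by positivity)]
    nlinarith [mul_pos heβ heβ, sq_nonneg Λ, mul_pos heβ (mul_pos heβ heβ)]
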